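/- Let r ≥ 0 be an integer and let OPT(r) be the maximum of ∏_{i=1}^s m_i over all integers 0 ≤ s ≤ r and all vectors (m_1, ..., m_s) of positive integers with ∑_{i=1}^s m_i = r. Then for every integer 0 ≤ s ≤ r and every vector (m_1, ..., m_s) of positive integers with ∑_{i=1}^s m_i = r, either ∏_{i=1}^s m_i = OPT(r) or ∏_{i=1}^s m_i ≤ (8/9)·OPT(r). -/

import Mathlib

set_option linter.unnecessarySimpa false

/-- The set of feasible objective values of the problem `MAX(r)`: products
`∏ m_i` over vectors `(m_1, ..., m_s)` of positive integers with `0 ≤ s ≤ r` and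
`∑ m_i = r`. -/
def feasibleProds (r : ℕ) : Set ℕ :=
  {P : ℕ | ∃ (s : ℕ) (m : Fin s → ℕ), s ≤ r ∧ (∀ i, 0 < m i) ∧
    (∑ i, m i) = r ∧ (∏ i, m i) = P}

def N : ℕ → ℕ
  | 0 => 1
  | 1 => 1
  | 2 => 2
  | 3 => 3
  | 4 => 4
  | (n+5) => 3 * N (n+2)

lemma N_le_succ : ∀ n, N n ≤ N (n+1)
  | 0 => by simp [N]
  | 1 => by simp [N]
  | 2 => by simp [N]
  | 3 => by simp [N]
  | 4 => by norm_num [N]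
  | (n+5) => by
      show 3 * N (n+2) ≤ 3 * N (n+3)
      exact Nat.mul_le_mul_left _ (N_le_succ (n+2))

lemma two_mul_le : ∀ n, 2 * N n ≤ N (n+2)
  | 0 => by simp [N]
  | 1 => by norm_num [N]
  | 2 => by norm_num [N]
  | 3 => by norm_num [N]
  | 4 => by norm_num [N]
  | (n+5) => by
      show 2 * (3 * N (n+2)) ≤ 3 * N (n+4)
      calc 2 * (3 * N (n+2)) = 3 * (2 * N (n+2)) := by ring
        _ ≤ 3 * N (n+4) := Nat.mul_le_mul_left _ (two_mul_le (n+2))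

lemma three_mul_le : ∀ n, 3 * N n ≤ N (n+3)
  | 0 => by simp [N]
  | 1 => by norm_num [N]
  | 2 => by norm_num [N]
  | 3 => by norm_num [N]
  | 4 => by norm_num [N]
  | (n+5) => by
      show 3 * (3 * N (n+2)) ≤ 3 * N (n+5)
      calc 3 * (3 * N (n+2)) = 3 * (3 * N (n+2)) := rfl
        _ ≤ 3 * N (n+5) := Nat.mul_le_mul_left _ (three_mul_le (n+2))

lemma four_mul_le : ∀ n, 4 * N n ≤ N (n+4)
  | 0 => by simp [N]
  | 1 => by norm_num [N]
  | 2 => by norm_num [N]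
  | 3 => by norm_num [N]
  | 4 => by norm_num [N]
  | (n+5) => by
      show 4 * (3 * N (n+2)) ≤ 3 * N (n+6)
      calc 4 * (3 * N (n+2)) = 3 * (4 * N (n+2)) := by ring
        _ ≤ 3 * N (n+6) := Nat.mul_le_mul_left _ (four_mul_le (n+2))

lemma le_N : ∀ n, n ≤ N n
  | 0 => by simp [N]
  | 1 => by simp [N]
  | 2 => by simp [N]
  | 3 => by simp [N]
  | 4 => by simp [N]
  | (n+5) => by
      show n + 5 ≤ 3 * N (n+2)
      have := le_N (n+2)
      omega

lemma super : ∀ x y : ℕ, N x * N y ≤ N (x + y)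
  | x, 0 => by simp [N]
  | x, 1 => by simpa [N] using N_le_succ x
  | x, 2 => by
      show N x * 2 ≤ N (x+2)
      rw [mul_comm]; exact two_mul_le x
  | x, 3 => by
      show N x * 3 ≤ N (x+3)
      rw [mul_comm]; exact three_mul_le x
  | x, 4 => by
      show N x * 4 ≤ N (x+4)
      rw [mul_comm]; exact four_mul_le x
  | x, (y+5) => by
      show N x * (3 * N (y+2)) ≤ N (x + (y+5))
      calc N x * (3 * N (y+2)) = 3 * (N x * N (y+2)) := by ring
        _ ≤ 3 * N (x + (y+2)) := Nat.mul_le_mul_left _ (super x (y+2))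
        _ ≤ N (x + (y+2) + 3) := three_mul_le _
        _ = N (x + (y+5)) := by ring_nf

lemma nine_le (a : ℕ) (h : 5 ≤ a) : 9 * a ≤ 8 * N a := by
  obtain ⟨n, rfl⟩ : ∃ n, a = n + 5 := ⟨a - 5, by omega⟩
  show 9 * (n+5) ≤ 8 * (3 * N (n+2))
  have := le_N (n+2)
  omega

lemma key_small : ∀ b a : ℕ, 1 ≤ a → a ≤ 4 →
    a * N b = N (a + b) ∨ 9 * (a * N b) ≤ 8 * N (a + b)
  | 0, a, h1, h4 => by interval_cases a <;> decide
  | 1, a, h1, h4 => by interval_cases a <;> decide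
  | 2, a, h1, h4 => by interval_cases a <;> decide
  | 3, a, h1, h4 => by interval_cases a <;> decide
  | 4, a, h1, h4 => by interval_cases a <;> decide
  | (b+5), a, h1, h4 => by
      have e1 : N (b+5) = 3 * N (b+2) := rfl
      have e2 : N (a + (b+5)) = 3 * N (a + (b+2)) := by
        have h : a + (b+5) = (a + b) + 5 := by ring
        have h2 : a + (b + 2) = (a + b) + 2 := by ring
        rw [h, h2]; rfl
      rcases key_small (b+2) a h1 h4 with h | h
      · left; rw [e1, e2, ← h]; ring
      · right; rw [e1, e2]
        calc 9 * (a * (3 * N (b+2))) = 3 * (9 * (a * N (b+2))) := by ring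
          _ ≤ 3 * (8 * N (a + (b+2))) := Nat.mul_le_mul_left _ h
          _ = 8 * (3 * N (a + (b+2))) := by ring

lemma key (a b : ℕ) (h1 : 1 ≤ a) :
    a * N b = N (a + b) ∨ 9 * (a * N b) ≤ 8 * N (a + b) := by
  rcases le_or_gt a 4 with h4 | h4
  · exact key_small b a h1 h4
  · right
    calc 9 * (a * N b) = (9 * a) * N b := by ring
      _ ≤ (8 * N a) * N b := Nat.mul_le_mul_right _ (nine_le a (by omega))
      _ = 8 * (N a * N b) := by ring
      _ ≤ 8 * N (a + b) := Nat.mul_le_mul_left _ (super a b)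

lemma upper : ∀ l : List ℕ, (∀ x ∈ l, 0 < x) → l.prod ≤ N l.sum
  | [], _ => by simp [N]
  | (a :: t), h => by
      simp only [List.prod_cons, List.sum_cons]
      calc a * t.prod ≤ N a * N t.sum := by
            exact Nat.mul_le_mul (le_N a) (upper t (fun x hx => h x (List.mem_cons_of_mem _ hx)))
        _ ≤ N (a + t.sum) := super a t.sum

lemma feas : ∀ r : ℕ, ∃ l : List ℕ, (∀ x ∈ l, 0 < x) ∧ l.sum = r ∧ l.prod = N r
  | 0 => ⟨[], by simp [N]⟩
  | 1 => ⟨[1], by simp [N]⟩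
  | 2 => ⟨[2], by simp [N]⟩
  | 3 => ⟨[3], by simp [N]⟩
  | 4 => ⟨[4], by simp [N]⟩
  | (r+5) => by
      obtain ⟨l, hpos, hsum, hprod⟩ := feas (r+2)
      refine ⟨3 :: l, ?_, ?_, ?_⟩
      · intro x hx
        rcases List.mem_cons.mp hx with h | h
        · omega
        · exact hpos x h
      · simp [hsum]; omega
      · show 3 * l.prod = N (r+5)
        rw [hprod]; rfl

lemma main_list : ∀ l : List ℕ, (∀ x ∈ l, 0 < x) →
    l.prod = N l.sum ∨ 9 * l.prod ≤ 8 * N l.sum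
  | [], _ => by simp [N]
  | (a :: t), h => by
      simp only [List.prod_cons, List.sum_cons]
      have ha : 1 ≤ a := h a List.mem_cons_self
      rcases main_list t (fun x hx => h x (List.mem_cons_of_mem _ hx)) with ih | ih
      · rw [ih]; exact key a t.sum ha
      · right
        calc 9 * (a * t.prod) = a * (9 * t.prod) := by ring
          _ ≤ a * (8 * N t.sum) := Nat.mul_le_mul_left _ ih
          _ = 8 * (a * N t.sum) := by ring
          _ ≤ 8 * (N a * N t.sum) := by
              exact Nat.mul_le_mul_left _ (Nat.mul_le_mul_right _ (le_N a))
          _ ≤ 8 * N (a + t.sum) := Nat.mul_le_mul_left _ (super a t.sum)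
lemma length_le_sum (l : List ℕ) (h : ∀ x ∈ l, 0 < x) : l.length ≤ l.sum := by
  induction l with
  | nil => simp
  | cons a t ih =>
      simp only [List.length_cons, List.sum_cons]
      have := h a List.mem_cons_self
      have := ih (fun x hx => h x (List.mem_cons_of_mem _ hx))
      omega

lemma mem_feasible (l : List ℕ) (r : ℕ) (h : ∀ x ∈ l, 0 < x) (hs : l.sum = r) :
    l.prod ∈ feasibleProds r := by
  refine ⟨l.length, l.get, ?_, ?_, ?_, ?_⟩
  · rw [← hs]; exact length_le_sum l h
  · intro i; exact h _ (by simpa using List.get_mem l i i.isLt)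
  · rw [← hs, ← List.sum_ofFn, List.ofFn_get]
  · rw [← List.prod_ofFn, List.ofFn_get]

theorem stmt_5 (r OPT : ℕ) (hOPT : IsGreatest (feasibleProds r) OPT) :
    ∀ (s : ℕ) (m : Fin s → ℕ), s ≤ r → (∀ i, 0 < m i) → (∑ i, m i) = r →
      (∏ i, m i) = OPT ∨ ((∏ i, m i : ℝ) ≤ 8 / 9 * (OPT : ℝ)) := by
  have hON : OPT = N r := by
    apply le_antisymm
    · obtain ⟨s, m, hs, hpos, hsum, hprod⟩ := hOPT.1
      have h1 : ∀ x ∈ List.ofFn m, 0 < x := by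
        intro x hx
        obtain ⟨i, rfl⟩ := List.mem_ofFn.mp hx
        exact hpos i
      have := upper (List.ofFn m) h1
      rwa [List.sum_ofFn, List.prod_ofFn, hsum, hprod] at this
    · obtain ⟨l, hl, hsum, hprod⟩ := feas r
      have := hOPT.2 (mem_feasible l r hl hsum)
      rwa [hprod] at this
  intro s m hs hpos hsum
  have h1 : ∀ x ∈ List.ofFn m, 0 < x := by
    intro x hx
    obtain ⟨i, rfl⟩ := List.mem_ofFn.mp hx
    exact hpos i
  rcases main_list (List.ofFn m) h1 with h | h
  · left
    rw [List.sum_ofFn, List.prod_ofFn, hsum] at h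
    rw [h, hON]
  · right
    rw [List.sum_ofFn, List.prod_ofFn, hsum, ← hON] at h
    have : ((9 : ℝ)) * (∏ i, m i : ℕ) ≤ 8 * OPT := by exact_mod_cast h
    push_cast at this ⊢
    linarith
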